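/- No physical rebound, vanishing viscosity limit before contact (Theorem 3.2(i)): Assume (B1), (B2), (D1), (D2) and b(0) = 0. Take initial data ξ₀ = ξ̇₀ = 0, h₀ > 0, ḣ₀ < 0, and set t₀ := −h₀/ḣ₀ and H(t) := max{0, h₀ + ḣ₀·t}. For μ > 0 let (h_μ, ξ_μ) denote the unique global solution of (gf). Then, as μ → 0⁺, h_μ → H and ξ_μ → 0 uniformly on [0, t₀]. -/

import Mathlib

open Real Filter Set MeasureTheory Metric

set_option maxHeartbeats 1000000

noncomputable section

/-- The potential `B(y) = ∫₀^y b(w) dw` of the elastic response `b`. -/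
def potB (b : ℝ → ℝ) (y : ℝ) : ℝ := ∫ w in (0:ℝ)..y, b w

/-- (B1): `b` is locally Lipschitz continuous. -/
def HypB1 (b : ℝ → ℝ) : Prop := LocallyLipschitz b

/-- (B2): the potential `B` is coercive, i.e. `B(y) → ∞` as `|y| → ∞`. -/
def HypB2 (b : ℝ → ℝ) : Prop := Tendsto (potB b) (cocompact ℝ) atTop

/-- (B3): the potential `B` is nonnegative. -/
def HypB3 (b : ℝ → ℝ) : Prop := ∀ y : ℝ, 0 ≤ potB b y

/-- (B4): `b(y)·y > 0` for all `y ≠ 0`. -/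
def HypB4 (b : ℝ → ℝ) : Prop := ∀ y : ℝ, y ≠ 0 → 0 < b y * y

/-- The drag factor `𝒟` maps `(0,∞) × ℝ` into `(0,∞)`. -/
def HypDpos (D : ℝ → ℝ → ℝ) : Prop := ∀ x ξ : ℝ, 0 < x → 0 < D x ξ

/-- (D1): `𝒟` is locally Lipschitz continuous on `(0,∞) × ℝ`. -/
def HypD1 (D : ℝ → ℝ → ℝ) : Prop :=
  ∀ p : ℝ × ℝ, 0 < p.1 → ∃ ε > 0, ∃ L : NNReal,
    LipschitzOnWith L (fun q : ℝ × ℝ => D q.1 q.2)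
      (Metric.ball p ε ∩ {q : ℝ × ℝ | 0 < q.1})

/-- (D2): singular lower bound `𝒟(h,ξ) ≥ c·h^(−α)`, uniformly in `ξ`. -/
def HypD2 (D : ℝ → ℝ → ℝ) (c α : ℝ) : Prop :=
  0 < c ∧ 1 ≤ α ∧ ∀ x ξ : ℝ, 0 < x → c * x ^ (-α) ≤ D x ξ

/-- (D3): `𝒟(h,ξ) = g(h)·h^(−α)` with `g : (0,∞) → [C₁,C₂]` locally Lipschitz. -/
def HypD3 (D : ℝ → ℝ → ℝ) (g : ℝ → ℝ) (C₁ C₂ α : ℝ) : Prop :=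
  0 < C₁ ∧ C₁ ≤ C₂ ∧ 1 ≤ α ∧
  (∀ x : ℝ, 0 < x → ∃ ε > 0, ∃ L : NNReal,
      LipschitzOnWith L g (Metric.ball x ε ∩ Set.Ioi 0)) ∧
  (∀ x : ℝ, 0 < x → g x ∈ Set.Icc C₁ C₂) ∧
  (∀ x ξ : ℝ, 0 < x → D x ξ = g x * x ^ (-α))

/-- (D4): `ξ ↦ 𝒟(h,ξ)` is nondecreasing for every `h > 0`. -/
def HypD4 (D : ℝ → ℝ → ℝ) : Prop :=
  ∀ x : ℝ, 0 < x → ∀ ξ₁ ξ₂ : ℝ, ξ₁ ≤ ξ₂ → D x ξ₁ ≤ D x ξ₂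

/-- (D5): `𝒟(h,−δ₁) ≥ c₁·h^(−γ₁)` with `γ₁ ≥ α`. -/
def HypD5 (D : ℝ → ℝ → ℝ) (α δ₁ c₁ γ₁ : ℝ) : Prop :=
  0 < δ₁ ∧ 0 < c₁ ∧ α ≤ γ₁ ∧ ∀ x : ℝ, 0 < x → c₁ * x ^ (-γ₁) ≤ D x (-δ₁)

/-- (D6): `𝒟(h,−δ₂) ≤ γ(h)·h^(−γ₁)` with `∫₀^h γ(y)/y dy → 0` as `h → 0⁺`. -/
def HypD6 (D : ℝ → ℝ → ℝ) (γ₁ δ₂ : ℝ) (γfun : ℝ → ℝ) : Prop :=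
  0 < δ₂ ∧ (∀ y : ℝ, 0 < y → 0 ≤ γfun y) ∧
  Tendsto (fun x : ℝ => ∫ y in (0:ℝ)..x, γfun y / y)
    (nhdsWithin 0 (Set.Ioi 0)) (nhds 0) ∧
  ∀ x : ℝ, 0 < x → D x (-δ₂) ≤ γfun x * x ^ (-γ₁)

/-- A global solution of the reduced system (gf) on `[0,∞)`:
`h, ξ` twice differentiable, `h > 0`, satisfying
`ḧ − ξ̈ = a·b(ξ)` and `ḧ = −b(ξ) − μ·𝒟(h,ξ)·ḣ`, with the given initial data. -/
def IsGlobalSolution (a μ : ℝ) (b : ℝ → ℝ) (D : ℝ → ℝ → ℝ)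
    (h0 hd0 ξ0 ξd0 : ℝ) (h ξ : ℝ → ℝ) : Prop :=
  (∀ t : ℝ, 0 ≤ t → 0 < h t) ∧
  (∀ t : ℝ, 0 ≤ t → DifferentiableAt ℝ h t ∧ DifferentiableAt ℝ (deriv h) t ∧
    DifferentiableAt ℝ ξ t ∧ DifferentiableAt ℝ (deriv ξ) t) ∧
  (∀ t : ℝ, 0 ≤ t → deriv (deriv h) t - deriv (deriv ξ) t = a * b (ξ t)) ∧
  (∀ t : ℝ, 0 ≤ t →
    deriv (deriv h) t = - b (ξ t) - μ * D (h t) (ξ t) * deriv h t) ∧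
  h 0 = h0 ∧ deriv h 0 = hd0 ∧ ξ 0 = ξ0 ∧ deriv ξ 0 = ξd0

/-- A solution of the nonlinear oscillator `ξ̈ + a·b(ξ) = 0` on `(t₀,∞)`
with `ξ(t₀) = 0` and `ξ̇(t₀) = v₀` (right derivative at `t₀`). -/
def IsOscSolution (a t₀ v₀ : ℝ) (b : ℝ → ℝ) (ψ : ℝ → ℝ) : Prop :=
  ψ t₀ = 0 ∧
  HasDerivWithinAt ψ v₀ (Set.Ici t₀) t₀ ∧
  ContinuousOn ψ (Set.Ici t₀) ∧
  Tendsto (deriv ψ) (nhdsWithin t₀ (Set.Ioi t₀)) (nhds v₀) ∧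
  ∀ t : ℝ, t₀ < t → DifferentiableAt ℝ ψ t ∧ DifferentiableAt ℝ (deriv ψ) t ∧
    deriv (deriv ψ) t + a * b (ψ t) = 0

lemma potB_hasDerivAt {b : ℝ → ℝ} (hb : Continuous b) (y : ℝ) :
    HasDerivAt (potB b) (b y) y :=
  intervalIntegral.integral_hasDerivAt_right (hb.intervalIntegrable 0 y)
    hb.stronglyMeasurable.stronglyMeasurableAtFilter hb.continuousAt

lemma potB_continuous {b : ℝ → ℝ} (hb : Continuous b) : Continuous (potB b) := by
  have : Differentiable ℝ (potB b) := fun y => (potB_hasDerivAt hb y).differentiableAt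
  exact this.continuous

lemma potB_zero (b : ℝ → ℝ) : potB b 0 = 0 := intervalIntegral.integral_same

lemma energy_decay {a μ : ℝ} {b : ℝ → ℝ} {D : ℝ → ℝ → ℝ} {h0 hd0 : ℝ} {h ξ : ℝ → ℝ}
    (ha : 0 < a) (hμ : 0 < μ) (hb : Continuous b) (hDpos : HypDpos D)
    (hsol : IsGlobalSolution a μ b D h0 hd0 0 0 h ξ) :
    ∀ t, 0 ≤ t →
      (deriv h t)^2/2 + potB b (ξ t) + (deriv h t - deriv ξ t)^2/(2*a)
        ≤ hd0^2/2 + hd0^2/(2*a) := by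
  obtain ⟨hpos, hdiff, heq3, heq4, hh0, hhd0, hξ0, hξd0⟩ := hsol
  set E : ℝ → ℝ := fun t =>
    (deriv h t)^2/2 + potB b (ξ t) + (deriv h t - deriv ξ t)^2/(2*a) with hE
  have hder : ∀ t, 0 ≤ t →
      HasDerivAt E (-(μ * D (h t) (ξ t)) * (deriv h t)^2) t := by
    intro t ht
    obtain ⟨d1, d2, d3, d4⟩ := hdiff t ht
    have H1 : HasDerivAt (deriv h) (deriv (deriv h) t) t := d2.hasDerivAt
    have H2 : HasDerivAt ξ (deriv ξ t) t := d3.hasDerivAt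
    have H3 : HasDerivAt (deriv ξ) (deriv (deriv ξ) t) t := d4.hasDerivAt
    have HB : HasDerivAt (fun s => potB b (ξ s)) (b (ξ t) * deriv ξ t) t := by
      have := (potB_hasDerivAt hb (ξ t)).comp t H2
      exact this
    have Hm : HasDerivAt E
        (((2:ℕ) * deriv h t ^ 1 * deriv (deriv h) t)/2 + b (ξ t) * deriv ξ t
          + ((2:ℕ) * (deriv h t - deriv ξ t) ^ 1 *
              (deriv (deriv h) t - deriv (deriv ξ) t))/(2*a)) t :=
      (((H1.pow 2).div_const 2).add HB).add (((H1.sub H3).pow 2).div_const (2*a))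
    convert Hm using 1
    have e3 := heq3 t ht
    have e4 := heq4 t ht
    have hξ'' : deriv (deriv ξ) t = deriv (deriv h) t - a * b (ξ t) := by linarith
    rw [hξ'', e4]
    have hane : a ≠ 0 := ne_of_gt ha
    field_simp
    ring
  intro t ht
  have hcont : ContinuousOn E (Icc 0 t) := fun s hs =>
    ((hder s hs.1).continuousAt).continuousWithinAt
  have hmono : AntitoneOn E (Icc 0 t) := by
    apply antitoneOn_of_deriv_nonpos (convex_Icc 0 t) hcont
    · intro s hs
      rw [interior_Icc] at hs
      exact (hder s hs.1.le).differentiableAt.differentiableWithinAt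
    · intro s hs
      rw [interior_Icc] at hs
      rw [(hder s hs.1.le).deriv]
      have hD := hDpos (h s) (ξ s) (hpos s hs.1.le)
      nlinarith [sq_nonneg (deriv h s), mul_pos hμ hD]
  have hle : E t ≤ E 0 := hmono (left_mem_Icc.2 ht) (right_mem_Icc.2 ht) ht
  have hE0 : E 0 = hd0^2/2 + hd0^2/(2*a) := by
    simp [hE, hhd0, hξ0, hξd0, potB_zero]
  rw [hE0] at hle
  exact hle

/-- Theorem 3.2(i): for `ḣ₀ < 0`, as `μ → 0⁺`, `h_μ → H` and `ξ_μ → 0`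
uniformly on `[0, t₀]`, where `H(t) = max{0, h₀ + ḣ₀ t}` and `t₀ = −h₀/ḣ₀`. -/
theorem no_physical_rebound_before_contact
    (a h0 hd0 c α : ℝ) (b : ℝ → ℝ) (D : ℝ → ℝ → ℝ)
    (h ξ : ℝ → ℝ → ℝ)
    (ha : 0 < a) (hh0 : 0 < h0) (hhd0 : hd0 < 0)
    (hb0 : b 0 = 0)
    (hB1 : HypB1 b) (hB2 : HypB2 b)
    (hDpos : HypDpos D) (hD1 : HypD1 D) (hD2 : HypD2 D c α)
    (hsol : ∀ μ : ℝ, 0 < μ →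
      IsGlobalSolution a μ b D h0 hd0 0 0 (h μ) (ξ μ)) :
    TendstoUniformlyOn (fun μ t => h μ t) (fun t => max 0 (h0 + hd0 * t))
      (nhdsWithin 0 (Set.Ioi 0)) (Set.Icc 0 (-h0 / hd0)) ∧
    TendstoUniformlyOn (fun μ t => ξ μ t) (fun _ => 0)
      (nhdsWithin 0 (Set.Ioi 0)) (Set.Icc 0 (-h0 / hd0)) := by
  clear hD2
  clear c α
  have hb : Continuous b := hB1.continuous
  have hd0ne : hd0 ≠ 0 := ne_of_lt hhd0
  set t₀ : ℝ := -h0 / hd0 with ht₀def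
  have ht₀pos : 0 < t₀ := div_pos_of_neg_of_neg (by linarith) hhd0
  have ht₀eq : hd0 * t₀ = -h0 := by
    rw [ht₀def]; field_simp
  clear_value t₀
  set E0 : ℝ := hd0^2/2 + hd0^2/(2*a) with hE0def
  clear_value E0
  have hd0sq : 0 < hd0^2 := by nlinarith
  have h2a : 0 < 2*a := by linarith
  have hE0pos : 0 < E0 := by
    have h1 := div_pos hd0sq two_pos
    have h2 := div_pos hd0sq h2a
    rw [hE0def]; linarith
  -- the sublevel-set bound R for ξ
  have hcoc : ∀ᶠ y in cocompact ℝ, E0 < potB b y := hB2.eventually_gt_atTop E0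
  obtain ⟨Kc, hKc, hKcsub⟩ := hasBasis_cocompact.eventually_iff.1 hcoc
  obtain ⟨R0, hR0⟩ := hKc.isBounded.subset_closedBall 0
  set R : ℝ := |R0| + 1 with hRdef
  have hRpos : 0 < R := by rw [hRdef]; positivity
  clear_value R
  have hsub : ∀ y, potB b y ≤ E0 → |y| ≤ R := by
    intro y hy
    by_contra hcon
    push_neg at hcon
    have hnot : y ∉ Kc := by
      intro hmem
      have := hR0 hmem
      rw [mem_closedBall, Real.dist_eq, sub_zero] at this
      have : |y| ≤ |R0| := this.trans (le_abs_self R0)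
      linarith
    exact absurd hy (not_le.2 (hKcsub hnot))
  -- lower bound -K0 for potB on [-R, R]
  obtain ⟨C0, hC0⟩ := (isCompact_Icc (a := -R) (b := R)).exists_bound_of_continuousOn
    (potB_continuous hb).continuousOn
  set K0 : ℝ := |C0| with hK0def
  have hK0nn : 0 ≤ K0 := hK0def ▸ abs_nonneg _
  clear_value K0
  have hK0bound : ∀ y, |y| ≤ R → -K0 ≤ potB b y := by
    intro y hy
    have hn := hC0 y (abs_le.1 hy)
    rw [Real.norm_eq_abs] at hn
    have := (abs_le.1 hn).1
    have := le_abs_self C0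
    rw [hK0def]
    linarith
  -- global velocity bounds
  set M : ℝ := Real.sqrt (2*(E0+K0)) with hMdef
  set Ma : ℝ := Real.sqrt (2*a*(E0+K0)) with hMadef
  clear_value M Ma
  have hEK : 0 < E0 + K0 := by linarith
  have hMpos : 0 < M := by rw [hMdef]; exact Real.sqrt_pos.2 (by linarith)
  have hMapos : 0 < Ma := by rw [hMadef]; exact Real.sqrt_pos.2 (by nlinarith)
  have habs : ∀ x C : ℝ, 0 ≤ C → x^2 ≤ C → |x| ≤ Real.sqrt C := by
    intro x C hC hx
    rw [← Real.sqrt_sq_eq_abs]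
    exact Real.sqrt_le_sqrt hx
  have facts : ∀ μ', 0 < μ' → ∀ t, 0 ≤ t →
      |ξ μ' t| ≤ R ∧ |deriv (h μ') t| ≤ M ∧ |deriv (ξ μ') t| ≤ M + Ma := by
    intro μ' hμ' t ht
    have hen := energy_decay ha hμ' hb hDpos (hsol μ' hμ')
    have e := hen t ht
    have hsq1 : (0:ℝ) ≤ (deriv (h μ') t)^2/2 := by positivity
    have hsq2 : (0:ℝ) ≤ (deriv (h μ') t - deriv (ξ μ') t)^2/(2*a) := by positivity
    have eE : (deriv (h μ') t)^2/2 + potB b (ξ μ' t)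
        + (deriv (h μ') t - deriv (ξ μ') t)^2/(2*a) ≤ E0 := by rw [hE0def]; exact e
    have hBle : potB b (ξ μ' t) ≤ E0 := by linarith [eE, hsq1, hsq2]
    have hξR : |ξ μ' t| ≤ R := hsub _ hBle
    have hBlo : -K0 ≤ potB b (ξ μ' t) := hK0bound _ hξR
    have h1 : (deriv (h μ') t)^2 ≤ 2*(E0+K0) := by nlinarith [eE, hsq1, hsq2, hBlo]
    have h2 : (deriv (h μ') t - deriv (ξ μ') t)^2 ≤ 2*a*(E0+K0) := by
      have h2' : (deriv (h μ') t - deriv (ξ μ') t)^2/(2*a) ≤ E0 + K0 := by linarith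
      have := mul_le_mul_of_nonneg_left h2' (le_of_lt h2a)
      rw [mul_div_cancel₀ _ (ne_of_gt h2a)] at this
      nlinarith
    have hM1 : |deriv (h μ') t| ≤ M := by
      rw [hMdef]; exact habs _ _ (by linarith) h1
    have hM2 : |deriv (h μ') t - deriv (ξ μ') t| ≤ Ma := by
      rw [hMadef]; exact habs _ _ (by nlinarith) h2
    refine ⟨hξR, hM1, ?_⟩
    have htri : |deriv (ξ μ') t| ≤ |deriv (h μ') t| + |deriv (h μ') t - deriv (ξ μ') t| := by
      calc |deriv (ξ μ') t|
          = |deriv (h μ') t - (deriv (h μ') t - deriv (ξ μ') t)| := by rw [sub_sub_cancel]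
        _ ≤ |deriv (h μ') t| + |deriv (h μ') t - deriv (ξ μ') t| := abs_sub _ _
    linarith
  -- Lipschitz bounds for h and ξ on [0, ∞)
  have hliph : ∀ μ', 0 < μ' → ∀ s t : ℝ, 0 ≤ s → 0 ≤ t →
      |h μ' t - h μ' s| ≤ M * |t - s| := by
    intro μ' hμ' s t hs ht
    have hd := (hsol μ' hμ').2.1
    have := Convex.norm_image_sub_le_of_norm_deriv_le (𝕜 := ℝ) (f := h μ')
      (s := Ici (0:ℝ)) (fun x hx => (hd x hx).1)
      (fun x hx => by rw [Real.norm_eq_abs]; exact (facts μ' hμ' x hx).2.1)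
      (convex_Ici 0) hs ht
    simpa [Real.norm_eq_abs] using this
  have hlipξ : ∀ μ', 0 < μ' → ∀ s t : ℝ, 0 ≤ s → 0 ≤ t →
      |ξ μ' t - ξ μ' s| ≤ (M+Ma) * |t - s| := by
    intro μ' hμ' s t hs ht
    have hd := (hsol μ' hμ').2.1
    have := Convex.norm_image_sub_le_of_norm_deriv_le (𝕜 := ℝ) (f := ξ μ')
      (s := Ici (0:ℝ)) (fun x hx => (hd x hx).2.2.1)
      (fun x hx => by rw [Real.norm_eq_abs]; exact (facts μ' hμ' x hx).2.2)
      (convex_Ici 0) hs ht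
    simpa [Real.norm_eq_abs] using this
  have hup : ∀ μ', 0 < μ' → ∀ t, 0 ≤ t → h μ' t ≤ h0 + M * t := by
    intro μ' hμ' t ht
    have := hliph μ' hμ' 0 t le_rfl ht
    rw [(hsol μ' hμ').2.2.2.2.1, sub_zero, abs_of_nonneg ht] at this
    have := (abs_le.1 this).2
    linarith
  -- local Lipschitz bound for b near 0
  obtain ⟨Kb', sb, hsmem, hblip⟩ := hB1 0
  obtain ⟨r', hr'pos, hball⟩ := Metric.mem_nhds_iff.1 hsmem
  set r : ℝ := r'/2 with hrdef
  set Kb : ℝ := (Kb' : ℝ) + 1 with hKbdef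
  have hrpos : 0 < r := by rw [hrdef]; linarith
  clear_value r
  have hKbpos : 0 < Kb := by
    rw [hKbdef]; have := Kb'.coe_nonneg; linarith
  clear_value Kb
  have hbb : ∀ y : ℝ, |y| ≤ r → |b y| ≤ Kb * |y| := by
    intro y hy
    have hymem : y ∈ sb := hball (by rw [mem_ball, Real.dist_eq, sub_zero]
                                     exact lt_of_le_of_lt hy (by rw [hrdef]; linarith))
    have h0mem : (0:ℝ) ∈ sb := hball (by rw [mem_ball, dist_self]; exact hr'pos)
    have := hblip.dist_le_mul y hymem 0 h0mem
    rw [Real.dist_eq, Real.dist_eq, hb0, sub_zero, sub_zero] at this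
    have h2 : (Kb':ℝ) * |y| ≤ Kb * |y| := by
      apply mul_le_mul_of_nonneg_right _ (abs_nonneg y)
      rw [hKbdef]; linarith
    linarith
  -- continuity of D on the open half plane
  have hDcont : ContinuousOn (fun q : ℝ × ℝ => D q.1 q.2) {q : ℝ × ℝ | 0 < q.1} := by
    intro p hp
    obtain ⟨ε', hε'pos, L, hL⟩ := hD1 p hp
    have hmem : Metric.ball p ε' ∩ {q : ℝ × ℝ | 0 < q.1} ∈ nhds p := by
      apply Filter.inter_mem (Metric.ball_mem_nhds p hε'pos)
      exact (isOpen_lt continuous_const continuous_fst).mem_nhds hp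
    exact ((hL.continuousOn p (by
      exact ⟨Metric.mem_ball_self hε'pos, hp⟩)).continuousAt hmem).continuousWithinAt
  -- the key quantitative estimate
  have key : ∀ ε > 0, ∃ μb > 0, ∀ μ, 0 < μ → μ < μb → ∀ t ∈ Icc 0 t₀,
      |h μ t - max 0 (h0 + hd0*t)| < ε ∧ |ξ μ t| < ε := by
    intro ε hε
    set X : ℝ := M + (M+Ma) + |hd0| + 1 with hXdef
    have hXpos : 0 < X := by rw [hXdef]; positivity
    set δ : ℝ := min t₀ (ε / (2*X)) with hδdef
    have hδpos : 0 < δ := lt_min ht₀pos (div_pos hε (by positivity))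
    have hδt₀ : δ ≤ t₀ := min_le_left _ _
    have hδle : δ * (2*X) ≤ ε := by
      have := min_le_right t₀ (ε / (2*X))
      rw [hδdef]
      exact (le_div_iff₀ (by positivity)).1 this
    have hδsmall : (M + (M+Ma) + |hd0|) * δ ≤ ε/2 := by
      rw [hXdef] at hδle
      linarith only [hδle, hδpos]
    clear_value δ
    set T : ℝ := t₀ - δ with hTdef
    have hTnn : 0 ≤ T := by rw [hTdef]; linarith
    have hTt₀ : T ≤ t₀ := by rw [hTdef]; linarith
    set ε1 : ℝ := -hd0 * δ / 2 with hε1def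
    have hε1pos : 0 < ε1 := by
      rw [hε1def]
      exact div_pos (mul_pos (neg_pos.2 hhd0) hδpos) two_pos
    have hHT : h0 + hd0 * T = 2*ε1 := by
      rw [hTdef, hε1def]; linear_combination ht₀eq
    have hε1h0 : 2*ε1 ≤ h0 := by
      rw [hε1def]
      have h1 := mul_le_mul_of_nonneg_left hδt₀ (neg_nonneg.2 hhd0.le)
      linarith only [h1, ht₀eq]
    clear_value T ε1
    set Hmax : ℝ := h0 + M * t₀ with hHmaxdef
    have hHmaxh0 : h0 ≤ Hmax := by
      rw [hHmaxdef]; linarith only [mul_pos hMpos ht₀pos]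
    clear_value Hmax
    -- bound for D on the compact box
    have hboxsub : (Icc ε1 Hmax ×ˢ Icc (-R) R : Set (ℝ × ℝ)) ⊆ {q : ℝ × ℝ | 0 < q.1} := by
      rintro ⟨x, y⟩ ⟨⟨hx1, _⟩, _⟩
      exact lt_of_lt_of_le hε1pos hx1
    obtain ⟨Cb0, hCb0⟩ := ((isCompact_Icc (a := ε1) (b := Hmax)).prod
      (isCompact_Icc (a := -R) (b := R))).exists_bound_of_continuousOn (hDcont.mono hboxsub)
    set Cb : ℝ := |Cb0| + 1 with hCbdef
    have hCbpos : 0 < Cb := by rw [hCbdef]; positivity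
    have hCb : ∀ x y : ℝ, ε1 ≤ x → x ≤ Hmax → |y| ≤ R → D x y ≤ Cb := by
      intro x y hx1 hx2 hy
      have := hCb0 (x, y) ⟨⟨hx1, hx2⟩, abs_le.1 hy⟩
      rw [Real.norm_eq_abs] at this
      have h1 := (abs_le.1 this).2
      have h2 := le_abs_self Cb0
      rw [hCbdef]; linarith
    clear_value Cb
    set K : ℝ := (1+a)*Kb + 1 with hKdef
    have hK1 : 1 ≤ K := by
      rw [hKdef]
      linarith only [mul_pos (by linarith only [ha] : (0:ℝ) < 1+a) hKbpos]
    have hKpos : 0 < K := by linarith only [hK1]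
    clear_value K
    set C1 : ℝ := Cb * M * Real.exp (K * t₀) / K with hC1def
    have hC1pos : 0 < C1 := by rw [hC1def]; positivity
    clear_value C1
    set μb : ℝ := min ((min r (ε/2)) / C1) ((min ε1 (ε/2)) / (C1*(t₀+1))) with hμbdef
    have hμbpos : 0 < μb := by
      rw [hμbdef]
      exact lt_min (div_pos (lt_min hrpos (by linarith only [hε])) hC1pos)
        (div_pos (lt_min hε1pos (by linarith only [hε]))
          (mul_pos hC1pos (by linarith only [ht₀pos])))
    refine ⟨μb, hμbpos, ?_⟩
    intro μ hμpos hμlt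
    obtain ⟨hpos, hdiff, heq3, heq4, hh0', hhd0', hξ0', hξd0'⟩ := hsol μ hμpos
    have hμ1 : μ * C1 < min r (ε/2) := by
      have h1 : μ < (min r (ε/2)) / C1 := lt_of_lt_of_le hμlt (hμbdef ▸ min_le_left _ _)
      calc μ * C1 < ((min r (ε/2)) / C1) * C1 := by
            exact mul_lt_mul_of_pos_right h1 hC1pos
        _ = min r (ε/2) := div_mul_cancel₀ _ (ne_of_gt hC1pos)
    have hμ2 : μ * C1 * (t₀+1) < min ε1 (ε/2) := by
      have h1 : μ < (min ε1 (ε/2)) / (C1*(t₀+1)) := lt_of_lt_of_le hμlt (hμbdef ▸ min_le_right _ _)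
      have h2 : 0 < C1*(t₀+1) := mul_pos hC1pos (by linarith only [ht₀pos])
      calc μ * C1 * (t₀+1) = μ * (C1*(t₀+1)) := by ring
        _ < ((min ε1 (ε/2)) / (C1*(t₀+1))) * (C1*(t₀+1)) := mul_lt_mul_of_pos_right h1 h2
        _ = min ε1 (ε/2) := div_mul_cancel₀ _ (ne_of_gt h2)
    have hμC1pos : 0 < μ * C1 := mul_pos hμpos hC1pos
    have hμr : μ * C1 < r := lt_of_lt_of_le hμ1 (min_le_left _ _)
    have hμε : μ * C1 < ε/2 := lt_of_lt_of_le hμ1 (min_le_right _ _)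
    have hμt₀ : μ * C1 * t₀ < ε1 := by
      have h1 := lt_of_lt_of_le hμ2 (min_le_left _ _)
      linarith only [h1, hμC1pos]
    have hμt₀ε : μ * C1 * t₀ < ε/2 := by
      have h1 := lt_of_lt_of_le hμ2 (min_le_right _ _)
      linarith only [h1, hμC1pos]
    -- the comparison vector
    set v : ℝ → ℝ × ℝ × ℝ := fun s => (ξ μ s, (deriv (ξ μ) s, deriv (h μ) s - hd0)) with hvdef
    have hnormv : ∀ s : ℝ, |ξ μ s| ≤ ‖v s‖ ∧ |deriv (ξ μ) s| ≤ ‖v s‖ ∧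
        |deriv (h μ) s - hd0| ≤ ‖v s‖ := by
      intro s
      rw [hvdef]
      simp only [Prod.norm_def, Real.norm_eq_abs]
      exact ⟨le_max_left _ _,
        le_trans (le_max_left _ _) (le_max_right _ _),
        le_trans (le_max_right _ _) (le_max_right _ _)⟩
    have gron : ∀ τ : ℝ, 0 ≤ τ → τ ≤ T →
        (∀ s, 0 ≤ s → s < τ → ε1 ≤ h μ s ∧ |ξ μ s| ≤ r) →
        ∀ t ∈ Icc (0:ℝ) τ, ‖v t‖ ≤ μ * C1 := by
      intro τ hτ0 hτT hgood
      have hcontv : ContinuousOn v (Icc 0 τ) := by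
        intro s hs
        have hd := hdiff s hs.1
        exact ((hd.2.2.1.continuousAt).prodMk ((hd.2.2.2.continuousAt).prodMk
          (hd.2.1.continuousAt.sub continuousAt_const))).continuousWithinAt
      have hderivv : ∀ t ∈ Ico (0:ℝ) τ, HasDerivWithinAt v
          (deriv (ξ μ) t, (deriv (deriv (ξ μ)) t, deriv (deriv (h μ)) t)) (Ici t) t := by
        intro t ht'
        have hd := hdiff t ht'.1
        exact ((hd.2.2.1.hasDerivAt).prodMk ((hd.2.2.2.hasDerivAt).prodMk
          ((hd.2.1.hasDerivAt).sub_const hd0))).hasDerivWithinAt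
      have hbound : ∀ t ∈ Ico (0:ℝ) τ,
          ‖(deriv (ξ μ) t, (deriv (deriv (ξ μ)) t, deriv (deriv (h μ)) t))‖
            ≤ K * ‖v t‖ + μ * (Cb * M) := by
        intro t ht'
        obtain ⟨hgε1, hgr⟩ := hgood t ht'.1 ht'.2
        have htle : t ≤ t₀ := le_trans (le_of_lt ht'.2) (le_trans hτT hTt₀)
        have hht : h μ t ≤ Hmax := by
          have h1 := hup μ hμpos t ht'.1
          rw [hHmaxdef]
          linarith only [h1, mul_le_mul_of_nonneg_left htle hMpos.le]
        have hξR' := (facts μ hμpos t ht'.1).1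
        have hMt := (facts μ hμpos t ht'.1).2.1
        have hDb : D (h μ t) (ξ μ t) ≤ Cb := hCb _ _ hgε1 hht hξR'
        have hDnn : 0 ≤ D (h μ t) (ξ μ t) := (hDpos _ _ (hpos t ht'.1)).le
        have hbξ : |b (ξ μ t)| ≤ Kb * ‖v t‖ := by
          calc |b (ξ μ t)| ≤ Kb * |ξ μ t| := hbb _ hgr
            _ ≤ Kb * ‖v t‖ := mul_le_mul_of_nonneg_left (hnormv t).1 hKbpos.le
        have hfric : |μ * D (h μ t) (ξ μ t) * deriv (h μ) t| ≤ μ * (Cb * M) := by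
          rw [abs_mul, abs_mul, abs_of_pos hμpos, abs_of_nonneg hDnn]
          have h1 : μ * D (h μ t) (ξ μ t) ≤ μ * Cb :=
            mul_le_mul_of_nonneg_left hDb hμpos.le
          have h2 : 0 ≤ μ * Cb := by positivity
          calc μ * D (h μ t) (ξ μ t) * |deriv (h μ) t|
              ≤ μ * Cb * M := by
                apply mul_le_mul h1 hMt (abs_nonneg _) h2
            _ = μ * (Cb * M) := by ring
        have e3 := heq3 t ht'.1
        have e4 := heq4 t ht'.1
        have hξ'' : deriv (deriv (ξ μ)) t
            = -((1+a) * b (ξ μ t)) - μ * D (h μ t) (ξ μ t) * deriv (h μ) t := by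
          have h1 : deriv (deriv (ξ μ)) t = deriv (deriv (h μ)) t - a * b (ξ μ t) := by
            linarith
          rw [h1, e4]; ring
        have hKnn : 0 ≤ K * ‖v t‖ := mul_nonneg (by linarith) (norm_nonneg _)
        have hμCM : 0 ≤ μ * (Cb * M) := by positivity
        rw [Prod.norm_def, Prod.norm_def]
        simp only [Real.norm_eq_abs]
        apply max_le
        · calc |deriv (ξ μ) t| ≤ ‖v t‖ := (hnormv t).2.1
            _ ≤ K * ‖v t‖ + μ * (Cb * M) := by
                have h1 := mul_le_mul_of_nonneg_right hK1 (norm_nonneg (v t))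
                linarith only [h1, hμCM]
        apply max_le
        · rw [hξ'']
          calc |-((1+a) * b (ξ μ t)) - μ * D (h μ t) (ξ μ t) * deriv (h μ) t|
              ≤ |-((1+a) * b (ξ μ t))| + |μ * D (h μ t) (ξ μ t) * deriv (h μ) t| :=
                abs_sub _ _
            _ ≤ (1+a) * (Kb * ‖v t‖) + μ * (Cb * M) := by
                rw [abs_neg, abs_mul, abs_of_pos (by linarith : (0:ℝ) < 1 + a)]
                exact add_le_add (mul_le_mul_of_nonneg_left hbξ (by linarith)) hfric
            _ ≤ K * ‖v t‖ + μ * (Cb * M) := by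
                rw [hKdef]
                linarith only [norm_nonneg (v t)]
        · rw [e4]
          calc |-b (ξ μ t) - μ * D (h μ t) (ξ μ t) * deriv (h μ) t|
              ≤ |-b (ξ μ t)| + |μ * D (h μ t) (ξ μ t) * deriv (h μ) t| := abs_sub _ _
            _ ≤ Kb * ‖v t‖ + μ * (Cb * M) := by
                rw [abs_neg]
                exact add_le_add hbξ hfric
            _ ≤ K * ‖v t‖ + μ * (Cb * M) := by
                rw [hKdef]
                have h1 : 0 ≤ a*(Kb*‖v t‖) :=
                  mul_nonneg ha.le (mul_nonneg hKbpos.le (norm_nonneg _))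
                linarith only [h1, norm_nonneg (v t)]
      have hv0 : ‖v 0‖ ≤ 0 := by
        rw [hvdef]
        simp [hξ0', hξd0', hhd0', Prod.norm_def]
      have hgb := norm_le_gronwallBound_of_norm_deriv_right_le hcontv hderivv hv0 hbound
      intro t htmem
      have hg := hgb t htmem
      have htle : t ≤ t₀ := le_trans htmem.2 (le_trans hτT hTt₀)
      calc ‖v t‖ ≤ gronwallBound 0 K (μ*(Cb*M)) (t - 0) := hg
        _ ≤ μ * C1 := by
          rw [gronwallBound_of_K_ne_0 (ne_of_gt hKpos)]
          simp only [zero_mul, zero_add, sub_zero]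
          rw [hC1def]
          have hexp : Real.exp (K*t) - 1 ≤ Real.exp (K*t₀) := by
            have h1 : K*t ≤ K*t₀ := mul_le_mul_of_nonneg_left htle hKpos.le
            have h2 := Real.exp_le_exp.2 h1
            linarith
          have h1 : 0 ≤ (μ*(Cb*M))/K := by positivity
          calc (μ*(Cb*M))/K * (Real.exp (K*t) - 1)
              ≤ (μ*(Cb*M))/K * Real.exp (K*t₀) := mul_le_mul_of_nonneg_left hexp h1
            _ = μ * (Cb * M * Real.exp (K*t₀) / K) := by ring
    -- deviation of h from the free fall line
    have hgron2 : ∀ τ : ℝ, 0 ≤ τ → τ ≤ T →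
        (∀ s, 0 ≤ s → s < τ → ε1 ≤ h μ s ∧ |ξ μ s| ≤ r) →
        ∀ t ∈ Icc (0:ℝ) τ, |h μ t - (h0 + hd0*t)| ≤ μ*C1*t := by
      intro τ hτ0 hτT hgood t htmem
      have hv := gron τ hτ0 hτT hgood
      have hdf : ∀ s ∈ Icc (0:ℝ) t, DifferentiableAt ℝ (fun u => h μ u - (h0 + hd0*u)) s := by
        intro s hs
        exact ((hdiff s hs.1).1).sub
          ((differentiableAt_const h0).add ((differentiableAt_fun_id).const_mul hd0))
      have hdb : ∀ s ∈ Icc (0:ℝ) t, ‖deriv (fun u => h μ u - (h0 + hd0*u)) s‖ ≤ μ*C1 := by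
        intro s hs
        have Hf : HasDerivAt (fun u => h μ u - (h0 + hd0*u)) (deriv (h μ) s - hd0) s := by
          have h1 : HasDerivAt (fun u : ℝ => h0 + hd0*u) hd0 s := by
            simpa using ((hasDerivAt_id s).const_mul hd0).const_add h0
          exact ((hdiff s hs.1).1.hasDerivAt).sub h1
        rw [Hf.deriv, Real.norm_eq_abs]
        exact le_trans (hnormv s).2.2 (hv s ⟨hs.1, le_trans hs.2 htmem.2⟩)
      have := Convex.norm_image_sub_le_of_norm_deriv_le (𝕜 := ℝ) hdf hdb
        (convex_Icc 0 t) (left_mem_Icc.2 htmem.1) (right_mem_Icc.2 htmem.1)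
      rw [Real.norm_eq_abs, Real.norm_eq_abs] at this
      have h0eq : h μ 0 - (h0 + hd0*0) = 0 := by rw [hh0']; ring
      rw [h0eq, sub_zero, sub_zero, abs_of_nonneg htmem.1] at this
      linarith
    -- the continuation argument
    have hcont_h : ContinuousOn (h μ) (Icc 0 T) := fun s hs =>
      ((hdiff s hs.1).1.continuousAt).continuousWithinAt
    have hcont_ξ : ContinuousOn (fun s => |ξ μ s|) (Icc 0 T) := fun s hs =>
      ((hdiff s hs.1).2.2.1.continuousAt.abs).continuousWithinAt
    have hgoodT : ∀ s, 0 ≤ s → s ≤ T → ε1 < h μ s ∧ |ξ μ s| < r := by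
      set S : Set ℝ := {s ∈ Icc (0:ℝ) T | h μ s ≤ ε1 ∨ r ≤ |ξ μ s|} with hSdef
      have hSsub : S ⊆ Icc 0 T := fun s hs => hs.1
      have hSclosed : IsClosed S := by
        have h1 : S = (Icc (0:ℝ) T ∩ (h μ) ⁻¹' (Iic ε1))
            ∪ (Icc (0:ℝ) T ∩ (fun s => |ξ μ s|) ⁻¹' (Ici r)) := by
          ext s
          simp only [hSdef, mem_sep_iff, mem_union, mem_inter_iff, mem_preimage,
            mem_Iic, mem_Ici]
          tauto
        rw [h1]
        exact (hcont_h.preimage_isClosed_of_isClosed isClosed_Icc isClosed_Iic).union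
          (hcont_ξ.preimage_isClosed_of_isClosed isClosed_Icc isClosed_Ici)
      have hSempty : S = ∅ := by
        by_contra hne
        obtain ⟨τ, hτS, hτleast⟩ := (isCompact_Icc.of_isClosed_subset hSclosed hSsub).exists_isLeast
          (Set.nonempty_iff_ne_empty.2 hne)
        have hτmem : τ ∈ Icc (0:ℝ) T := hτS.1
        have hτpos : 0 < τ := by
          rcases eq_or_lt_of_le hτmem.1 with heq | hlt
          · exfalso
            have h1 : h μ τ = h0 := by rw [← heq, hh0']
            have h2 : ξ μ τ = 0 := by rw [← heq, hξ0']
            rcases hτS.2 with hc | hc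
            · rw [h1] at hc; linarith
            · rw [h2, abs_zero] at hc; linarith
          · exact hlt
        have hgood' : ∀ s, 0 ≤ s → s < τ → ε1 ≤ h μ s ∧ |ξ μ s| ≤ r := by
          intro s hs0 hsτ
          have hsmem : s ∈ Icc (0:ℝ) T := ⟨hs0, le_trans (le_of_lt hsτ) hτmem.2⟩
          have hsnot : s ∉ S := fun hsS => absurd (hτleast hsS) (not_le.2 hsτ)
          rw [hSdef] at hsnot
          simp only [mem_sep_iff, not_and, not_or, not_le] at hsnot
          obtain ⟨h1, h2⟩ := hsnot hsmem
          exact ⟨le_of_lt h1, le_of_lt h2⟩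
        have hvτ : ‖v τ‖ ≤ μ * C1 :=
          gron τ hτmem.1 hτmem.2 hgood' τ (right_mem_Icc.2 hτmem.1)
        have hhτ : |h μ τ - (h0 + hd0*τ)| ≤ μ*C1*τ :=
          hgron2 τ hτmem.1 hτmem.2 hgood' τ (right_mem_Icc.2 hτmem.1)
        rcases hτS.2 with hc | hc
        · -- h μ τ ≤ ε1 is impossible
          have h1 : hd0 * T ≤ hd0 * τ := mul_le_mul_of_nonpos_left hτmem.2 hhd0.le
          have h2 : μ*C1*τ ≤ μ*C1*t₀ :=
            mul_le_mul_of_nonneg_left (le_trans hτmem.2 hTt₀) hμC1pos.le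
          have h3 := (abs_le.1 hhτ).1
          linarith only [h1, h2, h3, hc, hHT, hμt₀]
        · -- r ≤ |ξ μ τ| is impossible
          have := le_trans (hnormv τ).1 hvτ
          linarith
      intro s hs0 hsT
      have hsnot : s ∉ S := by rw [hSempty]; exact Set.notMem_empty s
      rw [hSdef] at hsnot
      simp only [mem_sep_iff, not_and, not_or, not_le] at hsnot
      exact hsnot ⟨hs0, hsT⟩
    have hgoodT' : ∀ s, 0 ≤ s → s < T → ε1 ≤ h μ s ∧ |ξ μ s| ≤ r := fun s hs0 hsT =>
      ⟨(hgoodT s hs0 hsT.le).1.le, (hgoodT s hs0 hsT.le).2.le⟩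
    have hvT := gron T hTnn le_rfl hgoodT'
    have hhT := hgron2 T hTnn le_rfl hgoodT'
    -- conclusion
    intro t htmem
    have hlin : (0:ℝ) ≤ h0 + hd0 * t := by
      have h1 : hd0 * t₀ ≤ hd0 * t := mul_le_mul_of_nonpos_left htmem.2 hhd0.le
      linarith [ht₀eq]
    rw [max_eq_right hlin]
    rcases le_or_gt t T with hcase | hcase
    · constructor
      · have h1 := hhT t ⟨htmem.1, hcase⟩
        have h2 : μ*C1*t ≤ μ*C1*t₀ := mul_le_mul_of_nonneg_left htmem.2 hμC1pos.le
        linarith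
      · have h1 := le_trans (hnormv t).1 (hvT t ⟨htmem.1, hcase⟩)
        linarith
    · have htT : t - T ≤ δ := by rw [hTdef] at hcase ⊢; linarith [htmem.2]
      have htTnn : 0 ≤ t - T := by linarith
      have hξT : |ξ μ T| ≤ μ * C1 := le_trans (hnormv T).1 (hvT T ⟨hTnn, le_rfl⟩)
      have hhTb : |h μ T - (h0 + hd0*T)| ≤ μ*C1*t₀ := by
        have h1 := hhT T ⟨hTnn, le_rfl⟩
        have h2 : μ*C1*T ≤ μ*C1*t₀ := mul_le_mul_of_nonneg_left hTt₀ hμC1pos.le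
        linarith
      have hlip1 : |h μ t - h μ T| ≤ M * (t - T) := by
        have := hliph μ hμpos T t hTnn htmem.1
        rwa [abs_of_nonneg htTnn] at this
      have hlip2 : |ξ μ t - ξ μ T| ≤ (M+Ma) * (t - T) := by
        have := hlipξ μ hμpos T t hTnn htmem.1
        rwa [abs_of_nonneg htTnn] at this
      have hMδ : M * (t - T) ≤ M * δ := mul_le_mul_of_nonneg_left htT hMpos.le
      have hMaδ : (M+Ma) * (t - T) ≤ (M+Ma) * δ :=
        mul_le_mul_of_nonneg_left htT (by linarith only [hMpos, hMapos])
      have habs0 : 0 ≤ |hd0| := abs_nonneg hd0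
      have hsplit : (M + (M+Ma) + |hd0|) * δ = M*δ + (M+Ma)*δ + |hd0| * δ := by ring
      constructor
      · have htri : |h μ t - (h0 + hd0*t)| ≤
            |h μ t - h μ T| + |h μ T - (h0 + hd0*T)| + |hd0| * (t - T) := by
          have h1 : h μ t - (h0 + hd0*t)
              = (h μ t - h μ T) + (h μ T - (h0 + hd0*T)) + hd0*(T - t) := by ring
          calc |h μ t - (h0 + hd0*t)|
              = |(h μ t - h μ T) + (h μ T - (h0 + hd0*T)) + hd0*(T - t)| := by rw [h1]
            _ ≤ |(h μ t - h μ T) + (h μ T - (h0 + hd0*T))| + |hd0*(T - t)| := abs_add_le _ _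
            _ ≤ |h μ t - h μ T| + |h μ T - (h0 + hd0*T)| + |hd0*(T - t)| := by
                linarith [abs_add_le (h μ t - h μ T) (h μ T - (h0 + hd0*T))]
            _ = |h μ t - h μ T| + |h μ T - (h0 + hd0*T)| + |hd0| * (t - T) := by
                rw [abs_mul, abs_of_nonpos (by linarith : T - t ≤ 0)]
                ring
        have hd0δ : |hd0| * (t - T) ≤ |hd0| * δ := mul_le_mul_of_nonneg_left htT habs0
        have hMaδnn : 0 ≤ (M+Ma) * δ :=
          mul_nonneg (by linarith only [hMpos, hMapos]) hδpos.le
        linarith only [htri, hlip1, hMδ, hhTb, hd0δ, hsplit, hδsmall, hμt₀ε, hMaδnn]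
      · have htri : |ξ μ t| ≤ |ξ μ t - ξ μ T| + |ξ μ T| := by
          calc |ξ μ t| = |(ξ μ t - ξ μ T) + ξ μ T| := by ring_nf
            _ ≤ |ξ μ t - ξ μ T| + |ξ μ T| := abs_add_le _ _
        have hMδnn : 0 ≤ M * δ := mul_nonneg hMpos.le hδpos.le
        have hd0δnn : 0 ≤ |hd0| * δ := mul_nonneg habs0 hδpos.le
        linarith only [htri, hlip2, hMaδ, hξT, hsplit, hδsmall, hμε, hMδnn, hd0δnn]
  constructor
  · rw [Metric.tendstoUniformlyOn_iff]
    intro ε hε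
    obtain ⟨μb, hμbpos, hkey⟩ := key ε hε
    have hmem : Ioo (0:ℝ) μb ∈ nhdsWithin (0:ℝ) (Ioi 0) :=
      Ioo_mem_nhdsGT_of_mem ⟨le_refl 0, hμbpos⟩
    filter_upwards [hmem] with μ hμ
    intro t htmem
    rw [Real.dist_eq, abs_sub_comm]
    exact (hkey μ hμ.1 hμ.2 t htmem).1
  · rw [Metric.tendstoUniformlyOn_iff]
    intro ε hε
    obtain ⟨μb, hμbpos, hkey⟩ := key ε hε
    have hmem : Ioo (0:ℝ) μb ∈ nhdsWithin (0:ℝ) (Ioi 0) :=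
      Ioo_mem_nhdsGT_of_mem ⟨le_refl 0, hμbpos⟩
    filter_upwards [hmem] with μ hμ
    intro t htmem
    rw [Real.dist_eq, zero_sub, abs_neg]
    exact (hkey μ hμ.1 hμ.2 t htmem).2
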